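/- Let S be a nonempty convex set of density matrices on ℂ^n and let N = {|v_ℓ⟩}_{ℓ=1}^n be an orthonormal basis. For 1 ≤ k ≤ n, define r_k = min_{ρ∈S} max_{|I|=k} Tr(N_I ρ), where N_I = Σ_{ℓ∈I}|v_ℓ⟩⟨v_ℓ|. Then the sequence (r_k) is concave in k, i.e., 2 r_k ≥ r_{k-1} + r_{k+1} for all 2 ≤ k ≤ n-1; equivalently, the vector r = (r_1, r_2 − r_1, ..., r_n − r_{n−1}) has entries in non-increasing order. -/

import Mathlib

open Finset Matrix ComplexOrder

/-- `N_I = ∑_{ℓ ∈ I} |v_ℓ⟩⟨v_ℓ|`. -/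
noncomputable def projSum {n : ℕ} (v : Fin n → Fin n → ℂ) (I : Finset (Fin n)) :
    Matrix (Fin n) (Fin n) ℂ :=
  ∑ ℓ ∈ I, Matrix.vecMulVec (v ℓ) (star (v ℓ))

/-- `max_{|I| = k} Tr(N_I ρ)`. -/
noncomputable def innerMax {n : ℕ} (v : Fin n → Fin n → ℂ)
    (ρ : Matrix (Fin n) (Fin n) ℂ) (k : ℕ) : ℝ :=
  sSup {s : ℝ | ∃ I : Finset (Fin n), I.card = k ∧ s = (Matrix.trace (projSum v I * ρ)).re}

lemma projSum_trace_eq {n : ℕ} (v : Fin n → Fin n → ℂ) (ρ : Matrix (Fin n) (Fin n) ℂ)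
    (I : Finset (Fin n)) :
    (Matrix.trace (projSum v I * ρ)).re
      = ∑ ℓ ∈ I, (Matrix.trace (Matrix.vecMulVec (v ℓ) (star (v ℓ)) * ρ)).re := by
  rw [projSum, Finset.sum_mul, Matrix.trace_sum, Complex.re_sum]

lemma innerMax_set_finite {n : ℕ} (v : Fin n → Fin n → ℂ)
    (ρ : Matrix (Fin n) (Fin n) ℂ) (k : ℕ) :
    {s : ℝ | ∃ I : Finset (Fin n), I.card = k ∧
      s = (Matrix.trace (projSum v I * ρ)).re}.Finite := by
  apply Set.Finite.subset (Set.finite_range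
    (fun I : Finset (Fin n) => (Matrix.trace (projSum v I * ρ)).re))
  rintro s ⟨I, -, rfl⟩
  exact ⟨I, rfl⟩

lemma innerMax_concave {n : ℕ} (v : Fin n → Fin n → ℂ) (ρ : Matrix (Fin n) (Fin n) ℂ)
    (k : ℕ) (hk : 2 ≤ k) (hkn : k + 1 ≤ n) :
    innerMax v ρ (k - 1) + innerMax v ρ (k + 1) ≤ 2 * innerMax v ρ k := by
  set p : Fin n → ℝ := fun ℓ => (Matrix.trace (Matrix.vecMulVec (v ℓ) (star (v ℓ)) * ρ)).re
  set T : ℕ → Set ℝ := fun m => {s : ℝ | ∃ I : Finset (Fin n), I.card = m ∧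
    s = (Matrix.trace (projSum v I * ρ)).re}
  have hfin : ∀ m, (T m).Finite := fun m => innerMax_set_finite v ρ m
  have hbdd : ∀ m, BddAbove (T m) := fun m => (hfin m).bddAbove
  have hnon : ∀ m, m ≤ n → (T m).Nonempty := by
    intro m hm
    obtain ⟨I, -, hI⟩ := Finset.exists_subset_card_eq (s := (Finset.univ : Finset (Fin n))) (n := m)
      (by simpa using hm)
    exact ⟨_, I, hI, rfl⟩
  -- sSup attained
  obtain ⟨I₀, hI₀c, hI₀⟩ := (hnon (k - 1) (by omega)).csSup_mem (hfin (k - 1))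
  obtain ⟨J₀, hJ₀c, hJ₀⟩ := (hnon (k + 1) hkn).csSup_mem (hfin (k + 1))
  -- pick x ∈ J₀ \ I₀
  have hsub : ¬ J₀ ⊆ I₀ := by
    intro h
    have := Finset.card_le_card h
    omega
  obtain ⟨x, hxJ, hxI⟩ := Finset.not_subset.mp hsub
  have hsum : ∀ I : Finset (Fin n), (Matrix.trace (projSum v I * ρ)).re = ∑ ℓ ∈ I, p ℓ :=
    fun I => projSum_trace_eq v ρ I
  have hle : ∀ I : Finset (Fin n), I.card = k → ∑ ℓ ∈ I, p ℓ ≤ innerMax v ρ k := by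
    intro I hI
    exact le_csSup (hbdd k) ⟨I, hI, (hsum I).symm⟩
  have h1 : ∑ ℓ ∈ insert x I₀, p ℓ ≤ innerMax v ρ k := by
    apply hle
    rw [Finset.card_insert_of_notMem hxI, hI₀c]
    omega
  have h2 : ∑ ℓ ∈ J₀.erase x, p ℓ ≤ innerMax v ρ k := by
    apply hle
    rw [Finset.card_erase_of_mem hxJ, hJ₀c]
    omega
  have key : (∑ ℓ ∈ insert x I₀, p ℓ) + ∑ ℓ ∈ J₀.erase x, p ℓ
      = (∑ ℓ ∈ I₀, p ℓ) + ∑ ℓ ∈ J₀, p ℓ := by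
    rw [Finset.sum_insert hxI, ← Finset.add_sum_erase _ p hxJ]
    ring
  have e1 : innerMax v ρ (k - 1) = ∑ ℓ ∈ I₀, p ℓ := by rw [innerMax, hI₀, hsum]
  have e2 : innerMax v ρ (k + 1) = ∑ ℓ ∈ J₀, p ℓ := by rw [innerMax, hJ₀, hsum]
  rw [e1, e2, ← key]
  linarith

/-- for a nonempty convex set `S` of density matrices and an orthonormal
basis `v`, the attained minima `r k = min_{ρ ∈ S} max_{|I| = k} Tr(N_I ρ)` form a
concave sequence: `2 r k ≥ r (k-1) + r (k+1)` for `2 ≤ k ≤ n - 1`. -/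
theorem lower_bound_sequence_concave {n : ℕ} (S : Set (Matrix (Fin n) (Fin n) ℂ))
    (hne : S.Nonempty) (hconv : Convex ℝ S)
    (hdens : ∀ ρ ∈ S, ρ.PosSemidef ∧ Matrix.trace ρ = 1)
    (v : Fin n → Fin n → ℂ)
    (hv : ∀ i j, star (v i) ⬝ᵥ v j = if i = j then (1 : ℂ) else 0)
    (r : ℕ → ℝ)
    (hr : ∀ k, 1 ≤ k → k ≤ n → IsLeast {t : ℝ | ∃ ρ ∈ S, t = innerMax v ρ k} (r k)) :
    ∀ k, 2 ≤ k → k + 1 ≤ n → r (k - 1) + r (k + 1) ≤ 2 * r k := by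
  intro k hk hkn
  obtain ⟨⟨ρ, hρS, hρ⟩, -⟩ := hr k (by omega) (by omega)
  have h1 : r (k - 1) ≤ innerMax v ρ (k - 1) :=
    (hr (k - 1) (by omega) (by omega)).2 ⟨ρ, hρS, rfl⟩
  have h2 : r (k + 1) ≤ innerMax v ρ (k + 1) :=
    (hr (k + 1) (by omega) (by omega)).2 ⟨ρ, hρS, rfl⟩
  have h3 := innerMax_concave v ρ k hk hkn
  rw [hρ]
  linarith
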